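/- Let L₀(s) = c₀ + s m₀ and L₁(s) = c₁ + s m₁ be skew lines with m₀ a unit vector, t = c₀ − c₁, n₁ = m₁ × t ≠ 0, n̂₁ = n₁/‖n₁‖. Then the minimum pivot angle θ₀ — the infimum over unit vectors m₀' such that the line through c₀ with direction m₀' intersects L₁, of the angle between m₀ and m₀' — satisfies sin θ₀ = |n̂₁ · m₀|. -/

import Mathlib

open RealInnerProductSpace

/-- The cross product on `EuclideanSpace ℝ (Fin 3)`. -/
noncomputable def cross3 (a b : EuclideanSpace ℝ (Fin 3)) : EuclideanSpace ℝ (Fin 3) :=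
  (WithLp.equiv 2 (Fin 3 → ℝ)).symm
    (crossProduct (WithLp.equiv 2 (Fin 3 → ℝ) a) (WithLp.equiv 2 (Fin 3 → ℝ) b))

lemma inner3 (a b : EuclideanSpace ℝ (Fin 3)) : ⟪a,b⟫ = a 0 * b 0 + a 1 * b 1 + a 2 * b 2 := by
  simp [PiLp.inner_apply, Fin.sum_univ_three]; ring

lemma cross3_apply (a b : EuclideanSpace ℝ (Fin 3)) : ∀ j : Fin 3,
    cross3 a b j = ![a 1 * b 2 - a 2 * b 1, a 2 * b 0 - a 0 * b 2, a 0 * b 1 - a 1 * b 0] j := by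
  intro j; fin_cases j <;> simp [cross3, crossProduct]

lemma cross3_inner_left (a b : EuclideanSpace ℝ (Fin 3)) : ⟪cross3 a b, a⟫ = 0 := by
  simp only [inner3, cross3_apply]; simp; ring

lemma cross3_inner_right (a b : EuclideanSpace ℝ (Fin 3)) : ⟪cross3 a b, b⟫ = 0 := by
  simp only [inner3, cross3_apply]; simp; ring

lemma cross3_smul_self (a : EuclideanSpace ℝ (Fin 3)) (β : ℝ) : cross3 a (β • a) = 0 := by
  ext j
  have h := cross3_apply a (β • a) j
  fin_cases j <;> simp_all <;> ring

lemma cross3_zero_left (b : EuclideanSpace ℝ (Fin 3)) : cross3 0 b = 0 := by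
  ext j
  have h := cross3_apply 0 b j
  fin_cases j <;> simp_all

lemma decomp (u v x : EuclideanSpace ℝ (Fin 3)) :
    ⟪cross3 u v, cross3 u v⟫ • x =
      (⟪x,v⟫*⟪u,u⟫ - ⟪x,u⟫*⟪v,u⟫) • v + (⟪x,u⟫*⟪v,v⟫ - ⟪x,v⟫*⟪u,v⟫) • u
        + ⟪x, cross3 u v⟫ • cross3 u v := by
  have h : ∀ i : Fin 3, (⟪cross3 u v, cross3 u v⟫ • x) i =
      ((⟪x,v⟫*⟪u,u⟫ - ⟪x,u⟫*⟪v,u⟫) • v + (⟪x,u⟫*⟪v,v⟫ - ⟪x,v⟫*⟪u,v⟫) • u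
        + ⟪x, cross3 u v⟫ • cross3 u v) i := by
    intro i
    simp only [PiLp.add_apply, PiLp.smul_apply, smul_eq_mul, inner3, cross3_apply]
    fin_cases i <;> simp <;> ring
  exact PiLp.ext h

lemma arccos_antitone : Antitone Real.arccos := by
  intro x y h
  simp only [Real.arccos]
  exact sub_le_sub_left (Real.monotone_arcsin h) _

/-- Minimum pivot angle for intersection: sin θ₀ = |n̂₁ · m₀|. -/
theorem min_pivot_angle (c₀ c₁ m₀ m₁ : EuclideanSpace ℝ (Fin 3))
    (hq : cross3 m₀ m₁ ≠ 0)
    (hskew : ¬ ∃ s₀ s₁ : ℝ, c₀ + s₀ • m₀ = c₁ + s₁ • m₁)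
    (hm₀ : ‖m₀‖ = 1)
    (hn : cross3 m₁ (c₀ - c₁) ≠ 0) :
    let n₁ := cross3 m₁ (c₀ - c₁)
    let nhat := ‖n₁‖⁻¹ • n₁
    Real.sin (sInf {θ : ℝ | ∃ m₀' : EuclideanSpace ℝ (Fin 3), ‖m₀'‖ = 1 ∧
        (∃ α β : ℝ, c₀ + α • m₀' = c₁ + β • m₁) ∧
        θ = Real.arccos |⟪m₀, m₀'⟫|}) = |⟪nhat, m₀⟫| := by
  intro n₁ nhat
  set t : EuclideanSpace ℝ (Fin 3) := c₀ - c₁ with ht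
  have hn₁ : n₁ = cross3 m₁ t := rfl
  have hnhat : nhat = ‖n₁‖⁻¹ • n₁ := rfl
  set S := {θ : ℝ | ∃ m₀' : EuclideanSpace ℝ (Fin 3), ‖m₀'‖ = 1 ∧
      (∃ α β : ℝ, c₀ + α • m₀' = c₁ + β • m₁) ∧
      θ = Real.arccos |⟪m₀, m₀'⟫|} with hSdef
  have hn' : n₁ ≠ 0 := hn
  have hNpos : (0:ℝ) < ‖n₁‖ := norm_pos_iff.mpr hn'
  have hNne : ‖n₁‖ ≠ 0 := ne_of_gt hNpos
  set c : ℝ := ⟪nhat, m₀⟫ with hc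
  set p : EuclideanSpace ℝ (Fin 3) := m₀ - c • nhat with hp
  -- basic orthogonality
  have hnm : ⟪n₁, m₁⟫ = 0 := by
    rw [hn₁]; exact cross3_inner_left m₁ t
  have hnt : ⟪n₁, t⟫ = 0 := by
    rw [hn₁]; exact cross3_inner_right m₁ t
  have hinner_nhat : ∀ x : EuclideanSpace ℝ (Fin 3), ⟪nhat, x⟫ = ‖n₁‖⁻¹ * ⟪n₁, x⟫ := by
    intro x; rw [hnhat, real_inner_smul_left]
  have hhm : ⟪nhat, m₁⟫ = 0 := by rw [hinner_nhat, hnm, mul_zero]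
  have hht : ⟪nhat, t⟫ = 0 := by rw [hinner_nhat, hnt, mul_zero]
  have hnhat_norm : ‖nhat‖ = 1 := by
    rw [hnhat, norm_smul, norm_inv, norm_norm, inv_mul_cancel₀ hNne]
  have hnhat_self : ⟪nhat, nhat⟫ = 1 := by
    rw [real_inner_self_eq_norm_sq, hnhat_norm]; norm_num
  have hm₀_self : ⟪m₀, m₀⟫ = 1 := by
    rw [real_inner_self_eq_norm_sq, hm₀]; norm_num
  -- p facts
  have hpn : ⟪nhat, p⟫ = 0 := by
    rw [hp, inner_sub_right, real_inner_smul_right, hnhat_self, ← hc]; ring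
  have hpm₀ : ⟪p, m₀⟫ = 1 - c^2 := by
    rw [hp, inner_sub_left, real_inner_smul_left, hm₀_self, ← hc]; ring
  have hpp : ⟪p, p⟫ = 1 - c^2 := by
    have h1 : (inner ℝ p nhat : ℝ) = 0 := by rw [real_inner_comm]; exact hpn
    nth_rewrite 2 [hp]
    rw [inner_sub_right, real_inner_smul_right, h1, hpm₀]; ring
  have hppnn : (0:ℝ) ≤ 1 - c^2 := by rw [← hpp]; exact real_inner_self_nonneg
  have hpnorm : ‖p‖ = Real.sqrt (1 - c^2) := by
    rw [← hpp, real_inner_self_eq_norm_sq, Real.sqrt_sq (norm_nonneg p)]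
  have hsplit : ∀ x : EuclideanSpace ℝ (Fin 3), ⟪nhat, x⟫ = 0 → ⟪m₀, x⟫ = ⟪p, x⟫ := by
    intro x hx
    rw [hp, inner_sub_left, real_inner_smul_left, hx, mul_zero, sub_zero]
  -- direction family
  have hvne : ∀ β : ℝ, β • m₁ - t ≠ 0 := by
    intro β h
    have h' : t = β • m₁ := (sub_eq_zero.mp h).symm
    exact hn' (by rw [hn₁, h', cross3_smul_self])
  have hmem : ∀ β : ℝ,
      Real.arccos (‖β • m₁ - t‖⁻¹ * |⟪m₀, β • m₁ - t⟫|) ∈ S := by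
    intro β
    have hvnorm : ‖β • m₁ - t‖ ≠ 0 := norm_ne_zero_iff.mpr (hvne β)
    refine ⟨‖β • m₁ - t‖⁻¹ • (β • m₁ - t), ?_, ⟨‖β • m₁ - t‖, β, ?_⟩, ?_⟩
    · rw [norm_smul, norm_inv, norm_norm, inv_mul_cancel₀ hvnorm]
    · rw [smul_inv_smul₀ hvnorm, ht]; abel
    · rw [real_inner_smul_right, abs_mul, abs_inv, abs_norm]
  have hSne : S.Nonempty := ⟨_, hmem 0⟩
  have hSbdd : BddBelow S := by
    refine ⟨0, fun θ hθ => ?_⟩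
    obtain ⟨m₀', _, _, rfl⟩ := hθ
    exact Real.arccos_nonneg _
  have hnv : ∀ β : ℝ, ⟪nhat, β • m₁ - t⟫ = 0 := by
    intro β
    rw [inner_sub_right, real_inner_smul_right, hhm, hht]; ring
  -- lower bound
  have hlow : ∀ θ ∈ S, Real.arccos ‖p‖ ≤ θ := by
    rintro θ ⟨m₀', hunit, ⟨α, β, heq⟩, rfl⟩
    have hα : α ≠ 0 := by
      rintro rfl
      exact hskew ⟨0, β, by simpa using heq⟩
    have h1 : α • m₀' = β • m₁ - t := by
      rw [ht]
      have h2 : c₀ + α • m₀' - c₀ = c₁ + β • m₁ - c₀ := by rw [heq]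
      rw [show c₀ + α • m₀' - c₀ = α • m₀' by abel] at h2
      rw [h2]; abel
    have h2 : ⟪nhat, m₀'⟫ = 0 := by
      have h3 : α * ⟪n₁, m₀'⟫ = 0 := by
        rw [← real_inner_smul_right, h1, inner_sub_right, real_inner_smul_right,
          hnm, hnt]; ring
      rw [hinner_nhat, (mul_eq_zero.mp h3).resolve_left hα, mul_zero]
    have h4 : |⟪m₀, m₀'⟫| ≤ ‖p‖ := by
      rw [hsplit m₀' h2]
      calc |⟪p, m₀'⟫| ≤ ‖p‖ * ‖m₀'‖ := abs_real_inner_le_norm p m₀'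
        _ = ‖p‖ := by rw [hunit, mul_one]
    exact arccos_antitone h4
  -- decomposition of p in the plane spanned by t, m₁
  set k : ℝ := ⟪n₁, n₁⟫ with hk
  have hkne : k ≠ 0 := inner_self_ne_zero.mpr hn'
  have hpn₁ : ⟪p, n₁⟫ = 0 := by
    have h5 : (0:ℝ) = ‖n₁‖⁻¹ * ⟪n₁, p⟫ := by rw [← hinner_nhat, hpn]
    have h6 : (inner ℝ n₁ p : ℝ) = 0 :=
      ((mul_eq_zero.mp h5.symm).resolve_left (inv_ne_zero hNne))
    rw [real_inner_comm]; exact h6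
  set A : ℝ := ⟪p,t⟫*⟪m₁,m₁⟫ - ⟪p,m₁⟫*⟪t,m₁⟫ with hA
  set B : ℝ := ⟪p,m₁⟫*⟪t,t⟫ - ⟪p,t⟫*⟪m₁,t⟫ with hB
  have hkp : k • p = A • t + B • m₁ := by
    have h := decomp m₁ t p
    rw [← hn₁, ← hk, hpn₁, zero_smul, add_zero] at h
    exact h
  have hpdecomp : p = (k⁻¹ * A) • t + (k⁻¹ * B) • m₁ := by
    rw [mul_smul, mul_smul, ← smul_add, ← hkp, inv_smul_smul₀ hkne]
  set a : ℝ := k⁻¹ * A with ha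
  set b : ℝ := k⁻¹ * B with hb
  -- upper bound
  have hupp : sInf S ≤ Real.arccos ‖p‖ := by
    by_cases hA0 : a = 0
    · by_cases hB0 : b = 0
      · -- p = 0
        have hp0 : p = 0 := by rw [hpdecomp, hA0, hB0]; simp
        have hval : ‖(0:ℝ) • m₁ - t‖⁻¹ * |⟪m₀, (0:ℝ) • m₁ - t⟫| = ‖p‖ := by
          rw [hsplit _ (hnv 0), hp0]; simp
        calc sInf S ≤ Real.arccos (‖(0:ℝ) • m₁ - t‖⁻¹ * |⟪m₀, (0:ℝ) • m₁ - t⟫|) :=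
              csInf_le hSbdd (hmem 0)
          _ = Real.arccos ‖p‖ := by rw [hval]
      · -- p = b • m₁, b ≠ 0 : limit argument
        have hpm : p = b • m₁ := by rw [hpdecomp, hA0]; simp
        have hm₁ne : m₁ ≠ 0 := by
          intro h0
          rw [hn₁, h0] at hn'
          exact hn' (cross3_zero_left t)
        have hm₁norm : ‖m₁‖ ≠ 0 := norm_ne_zero_iff.mpr hm₁ne
        have hw : Filter.Tendsto (fun β : ℝ => m₁ - β⁻¹ • t) Filter.atTop (nhds m₁) := by
          have h1 : Filter.Tendsto (fun r : ℝ => r⁻¹) Filter.atTop (nhds 0) :=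
            tendsto_inv_atTop_zero
          have h2 := h1.smul_const t
          rw [zero_smul] at h2
          have h3 : Filter.Tendsto (fun _ : ℝ => m₁) Filter.atTop (nhds m₁) :=
            tendsto_const_nhds
          simpa using h3.sub h2
        have hlim1 : Filter.Tendsto
            (fun β : ℝ => ‖m₁ - β⁻¹ • t‖⁻¹ * |⟪m₀, m₁ - β⁻¹ • t⟫|)
            Filter.atTop (nhds (‖m₁‖⁻¹ * |⟪m₀, m₁⟫|)) :=
          (hw.norm.inv₀ hm₁norm).mul ((tendsto_const_nhds.inner hw).abs)
        have hlim2 : Filter.Tendsto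
            (fun β : ℝ => Real.arccos (‖m₁ - β⁻¹ • t‖⁻¹ * |⟪m₀, m₁ - β⁻¹ • t⟫|))
            Filter.atTop (nhds (Real.arccos (‖m₁‖⁻¹ * |⟪m₀, m₁⟫|))) := by
          have h3 := (Real.continuous_arccos.tendsto _).comp hlim1
          exact h3
        have hFm₁ : Real.arccos (‖m₁‖⁻¹ * |⟪m₀, m₁⟫|) = Real.arccos ‖p‖ := by
          have h9 : ⟪m₀, m₁⟫ = b * ⟪m₁, m₁⟫ := by
            rw [hsplit _ hhm, hpm, real_inner_smul_left]
          rw [h9, real_inner_self_eq_norm_sq, hpm, norm_smul, Real.norm_eq_abs, abs_mul]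
          congr 1
          rw [abs_of_nonneg (sq_nonneg ‖m₁‖)]
          field_simp
        have hev : ∀ᶠ β : ℝ in Filter.atTop,
            sInf S ≤ Real.arccos (‖m₁ - β⁻¹ • t‖⁻¹ * |⟪m₀, m₁ - β⁻¹ • t⟫|) := by
          filter_upwards [Filter.eventually_ge_atTop (1:ℝ)] with β hβ
          have hβ0 : β ≠ 0 := by intro h; rw [h] at hβ; linarith
          have hscale : β • (m₁ - β⁻¹ • t) = β • m₁ - t := by
            rw [smul_sub, smul_smul, mul_inv_cancel₀ hβ0, one_smul]
          have hFeq : Real.arccos (‖m₁ - β⁻¹ • t‖⁻¹ * |⟪m₀, m₁ - β⁻¹ • t⟫|)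
              = Real.arccos (‖β • m₁ - t‖⁻¹ * |⟪m₀, β • m₁ - t⟫|) := by
            rw [← hscale, norm_smul, real_inner_smul_right, abs_mul, Real.norm_eq_abs,
              mul_inv]
            congr 1
            have habs : |β| ≠ 0 := abs_ne_zero.mpr hβ0
            generalize ‖m₁ - β⁻¹ • t‖ = X
            generalize |(inner ℝ m₀ (m₁ - β⁻¹ • t) : ℝ)| = Y
            field_simp
          rw [hFeq]
          exact csInf_le hSbdd (hmem β)
        have h10 := ge_of_tendsto hlim2 hev
        rwa [hFm₁] at h10
    · -- attained at β₀ = -b/a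
      set β₀ : ℝ := -b / a with hβ₀
      have hveq : β₀ • m₁ - t = (-a⁻¹) • p := by
        rw [hpdecomp, hβ₀]
        match_scalars <;> field_simp
      have hpne : p ≠ 0 := by
        intro h0
        exact hvne β₀ (by rw [hveq, h0, smul_zero])
      have hpnormne : ‖p‖ ≠ 0 := norm_ne_zero_iff.mpr hpne
      have hval : ‖β₀ • m₁ - t‖⁻¹ * |⟪m₀, β₀ • m₁ - t⟫| = ‖p‖ := by
        rw [hsplit _ (hnv β₀), hveq, norm_smul, real_inner_smul_right,
          real_inner_self_eq_norm_sq, abs_mul, Real.norm_eq_abs, abs_neg, abs_inv,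
          abs_of_nonneg (sq_nonneg ‖p‖)]
        have habs : |a| ≠ 0 := abs_ne_zero.mpr hA0
        field_simp
      calc sInf S ≤ Real.arccos (‖β₀ • m₁ - t‖⁻¹ * |⟪m₀, β₀ • m₁ - t⟫|) :=
            csInf_le hSbdd (hmem β₀)
        _ = Real.arccos ‖p‖ := by rw [hval]
  have hInf : sInf S = Real.arccos ‖p‖ :=
    le_antisymm hupp (le_csInf hSne hlow)
  rw [hInf, Real.sin_arccos, hpnorm, Real.sq_sqrt hppnn,
    show (1:ℝ) - (1 - c^2) = c^2 by ring, Real.sqrt_sq_eq_abs]
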